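/- Let n ≥ 2 and let a be any element of the submonoid of STVB_n generated by ρ_1,…,ρ_{n−1}. Then a is a unit of STVB_n (since each ρ_i is an involution), and writing a⁻¹ for its inverse and π = φ₁(a)⁻¹ ∈ S_n, for all 1 ≤ i ≠ j ≤ n and all 1 ≤ i ≤ n one has: a⁻¹·λ_{i,j}·a = λ_{π(i),π(j)}, a⁻¹·y_{i,j}·a = y_{π(i),π(j)}, and a⁻¹·γ_i·a = γ_{π(i)}. -/

import Mathlib

namespace SingTVB

/-- Generators of the singular twisted virtual braid monoid `STVB n`
(0-based indexing: `sig i` is the paper's σ_{i+1}, `gam j` is the paper's γ_{j+1}). -/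
inductive Gen (n : ℕ) : Type
  | sig : Fin (n - 1) → Gen n
  | sigb : Fin (n - 1) → Gen n
  | rho : Fin (n - 1) → Gen n
  | tau : Fin (n - 1) → Gen n
  | gam : Fin n → Gen n

abbrev FM (n : ℕ) := FreeMonoid (Gen n)

/-- The strand `i` (lower strand of the `i`-th crossing), as an element of `Fin n`. -/
def fa {n : ℕ} (i : Fin (n - 1)) : Fin n := ⟨i.val, by have := i.isLt; omega⟩
/-- The strand `i+1` (upper strand of the `i`-th crossing), as an element of `Fin n`. -/
def fb {n : ℕ} (i : Fin (n - 1)) : Fin n := ⟨i.val + 1, by have := i.isLt; omega⟩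

def Ws {n : ℕ} (i : Fin (n - 1)) : FM n := FreeMonoid.of (Gen.sig i)
def Wsb {n : ℕ} (i : Fin (n - 1)) : FM n := FreeMonoid.of (Gen.sigb i)
def Wr {n : ℕ} (i : Fin (n - 1)) : FM n := FreeMonoid.of (Gen.rho i)
def Wt {n : ℕ} (i : Fin (n - 1)) : FM n := FreeMonoid.of (Gen.tau i)
def Wg {n : ℕ} (j : Fin n) : FM n := FreeMonoid.of (Gen.gam j)

/-- `|i - j| > 1`. -/
def Far {m : ℕ} (i j : Fin m) : Prop := i.val + 1 < j.val ∨ j.val + 1 < i.val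

/-- Defining relations of the singular twisted virtual braid monoid. -/
inductive Rel (n : ℕ) : FM n → FM n → Prop
  | ss {i j : Fin (n - 1)} (h : Far i j) : Rel n (Ws i * Ws j) (Ws j * Ws i)
  | rr {i j : Fin (n - 1)} (h : Far i j) : Rel n (Wr i * Wr j) (Wr j * Wr i)
  | sr {i j : Fin (n - 1)} (h : Far i j) : Rel n (Ws i * Wr j) (Wr j * Ws i)
  | tt {i j : Fin (n - 1)} (h : Far i j) : Rel n (Wt i * Wt j) (Wt j * Wt i)
  | st {i j : Fin (n - 1)} (h : Far i j) : Rel n (Ws i * Wt j) (Wt j * Ws i)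
  | tr {i j : Fin (n - 1)} (h : Far i j) : Rel n (Wt i * Wr j) (Wr j * Wt i)
  | sss {i j : Fin (n - 1)} (h : j.val = i.val + 1) :
      Rel n (Ws i * Ws j * Ws i) (Ws j * Ws i * Ws j)
  | rrr {i j : Fin (n - 1)} (h : j.val = i.val + 1) :
      Rel n (Wr i * Wr j * Wr i) (Wr j * Wr i * Wr j)
  | rsr {i j : Fin (n - 1)} (h : j.val = i.val + 1) :
      Rel n (Wr i * Ws j * Wr i) (Wr j * Ws i * Wr j)
  | rtr {i j : Fin (n - 1)} (h : j.val = i.val + 1) :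
      Rel n (Wr i * Wt j * Wr i) (Wr j * Wt i * Wr j)
  | sst {i j : Fin (n - 1)} (h : j.val = i.val + 1) :
      Rel n (Ws i * Ws j * Wt i) (Wt j * Ws i * Ws j)
  | sst' {i j : Fin (n - 1)} (h : j.val = i.val + 1) :
      Rel n (Ws j * Ws i * Wt j) (Wt i * Ws j * Ws i)
  | rho2 (i : Fin (n - 1)) : Rel n (Wr i * Wr i) 1
  | ssb (i : Fin (n - 1)) : Rel n (Ws i * Wsb i) 1
  | sbs (i : Fin (n - 1)) : Rel n (Wsb i * Ws i) 1
  | stc (i : Fin (n - 1)) : Rel n (Ws i * Wt i) (Wt i * Ws i)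
  | grel (i : Fin (n - 1)) : Rel n (Wg (fb i) * Wr i) (Wr i * Wg (fa i))
  | rsrg (i : Fin (n - 1)) :
      Rel n (Wr i * Ws i * Wr i) (Wg (fb i) * Wg (fa i) * Ws i * Wg (fa i) * Wg (fb i))
  | rtrg (i : Fin (n - 1)) :
      Rel n (Wr i * Wt i * Wr i) (Wg (fb i) * Wg (fa i) * Wt i * Wg (fa i) * Wg (fb i))
  | g2 (j : Fin n) : Rel n (Wg j * Wg j) 1
  | gg (i j : Fin n) : Rel n (Wg i * Wg j) (Wg j * Wg i)
  | grc {i : Fin (n - 1)} {j : Fin n} (h1 : j ≠ fa i) (h2 : j ≠ fb i) :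
      Rel n (Wg j * Wr i) (Wr i * Wg j)
  | sgc {i : Fin (n - 1)} {j : Fin n} (h1 : j ≠ fa i) (h2 : j ≠ fb i) :
      Rel n (Ws i * Wg j) (Wg j * Ws i)
  | tgc {i : Fin (n - 1)} {j : Fin n} (h1 : j ≠ fa i) (h2 : j ≠ fb i) :
      Rel n (Wt i * Wg j) (Wg j * Wt i)

/-- The singular twisted virtual braid monoid on `n` strands. -/
abbrev STVB (n : ℕ) := PresentedMonoid (Rel n)

def mkS (n : ℕ) : FM n →* STVB n := PresentedMonoid.mk (Rel n)

def sigE (n : ℕ) (i : Fin (n - 1)) : STVB n := mkS n (Ws i)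
def sigbE (n : ℕ) (i : Fin (n - 1)) : STVB n := mkS n (Wsb i)
def rhoE (n : ℕ) (i : Fin (n - 1)) : STVB n := mkS n (Wr i)
def tauE (n : ℕ) (i : Fin (n - 1)) : STVB n := mkS n (Wt i)
def gamE (n : ℕ) (j : Fin n) : STVB n := mkS n (Wg j)

/-- The transposition `(i, i+1)` in the symmetric group on `Fin n`. -/
def swp {n : ℕ} (i : Fin (n - 1)) : Equiv.Perm (Fin n) := Equiv.swap (fa i) (fb i)

end SingTVB
namespace SingTVB

/-- ρ-generator word with a natural-number (0-based) index; junk value `1` out of range. -/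
def WrN (n : ℕ) (k : ℕ) : FM n := if h : k < n - 1 then Wr ⟨k, h⟩ else 1
def WsN (n : ℕ) (k : ℕ) : FM n := if h : k < n - 1 then Ws ⟨k, h⟩ else 1
def WsbN (n : ℕ) (k : ℕ) : FM n := if h : k < n - 1 then Wsb ⟨k, h⟩ else 1
def WtN (n : ℕ) (k : ℕ) : FM n := if h : k < n - 1 then Wt ⟨k, h⟩ else 1

/-- The ascending word `ρ_{i+1} ρ_{i+2} ⋯ ρ_{j-1}` (0-based strand indices `i < j`). -/
def asc (n i j : ℕ) : FM n := ((List.range' (i + 1) (j - 1 - i)).map (WrN n)).prod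
/-- The descending word `ρ_{j-1} ρ_{j-2} ⋯ ρ_{i+1}` (0-based strand indices `i < j`). -/
def desc (n i j : ℕ) : FM n := ((List.range' (i + 1) (j - 1 - i)).reverse.map (WrN n)).prod

/-- The word for the generator `λ_{i,j}` (0-based strands `i ≠ j`), built from
`λ_{i,i+1} = ρ_i σ̄_i` and `λ_{i+1,i} = ρ_i λ_{i,i+1} ρ_i` by conjugation. -/
def lamW (n i j : ℕ) : FM n :=
  if i < j then desc n i j * (WrN n i * WsbN n i) * asc n i j
  else desc n j i * (WrN n j * (WrN n j * WsbN n j) * WrN n j) * asc n j i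

/-- The word for `λ̄_{i,j}`, built from `λ̄_{i,i+1} = σ_i ρ_i`. -/
def lamBarW (n i j : ℕ) : FM n :=
  if i < j then desc n i j * (WsN n i * WrN n i) * asc n i j
  else desc n j i * (WrN n j * (WsN n j * WrN n j) * WrN n j) * asc n j i

/-- The word for `y_{i,j}`, built from `y_{i,i+1} = τ_i ρ_i`. -/
def yW (n i j : ℕ) : FM n :=
  if i < j then desc n i j * (WtN n i * WrN n i) * asc n i j
  else desc n j i * (WrN n j * (WtN n j * WrN n j) * WrN n j) * asc n j i

/-- The word for `x_{i,j}`, built from `x_{i,i+1} = σ_i` and `x_{i+1,i} = ρ_i σ_i ρ_i`. -/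
def xW (n i j : ℕ) : FM n :=
  if i < j then desc n i j * WsN n i * asc n i j
  else desc n j i * (WrN n j * WsN n j * WrN n j) * asc n j i

/-- The word for `x̄_{i,j}`, with `σ̄` in place of `σ`. -/
def xBarW (n i j : ℕ) : FM n :=
  if i < j then desc n i j * WsbN n i * asc n i j
  else desc n j i * (WrN n j * WsbN n j * WrN n j) * asc n j i

/-- The word for `z_{i,j}`, built from `z_{i,i+1} = τ_i` and `z_{i+1,i} = ρ_i τ_i ρ_i`. -/
def zW (n i j : ℕ) : FM n :=
  if i < j then desc n i j * WtN n i * asc n i j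
  else desc n j i * (WrN n j * WtN n j * WrN n j) * asc n j i

def lam (n : ℕ) (i j : Fin n) : STVB n := mkS n (lamW n i j)
def lamBar (n : ℕ) (i j : Fin n) : STVB n := mkS n (lamBarW n i j)
def yel (n : ℕ) (i j : Fin n) : STVB n := mkS n (yW n i j)
def xel (n : ℕ) (i j : Fin n) : STVB n := mkS n (xW n i j)
def xBar (n : ℕ) (i j : Fin n) : STVB n := mkS n (xBarW n i j)
def zel (n : ℕ) (i j : Fin n) : STVB n := mkS n (zW n i j)

end SingTVB
namespace SingTVB

variable {n : ℕ}

lemma mkS_rel {a b : FM n} (h : Rel n a b) : mkS n a = mkS n b :=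
  Quotient.sound (ConGen.Rel.of a b h)

/-- ρ with ℕ index. -/
def Rn (n k : ℕ) : STVB n := mkS n (WrN n k)
def Sn (n k : ℕ) : STVB n := mkS n (WsN n k)
def Sbn (n k : ℕ) : STVB n := mkS n (WsbN n k)
def Tn (n k : ℕ) : STVB n := mkS n (WtN n k)

lemma Rn_in {k : ℕ} (h : k < n - 1) : Rn n k = mkS n (Wr ⟨k, h⟩) := by
  rw [Rn, WrN, dif_pos h]
lemma Rn_out {k : ℕ} (h : ¬ k < n - 1) : Rn n k = 1 := by
  rw [Rn, WrN, dif_neg h, map_one]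
lemma Sn_in {k : ℕ} (h : k < n - 1) : Sn n k = mkS n (Ws ⟨k, h⟩) := by
  rw [Sn, WsN, dif_pos h]
lemma Sn_out {k : ℕ} (h : ¬ k < n - 1) : Sn n k = 1 := by
  rw [Sn, WsN, dif_neg h, map_one]
lemma Sbn_in {k : ℕ} (h : k < n - 1) : Sbn n k = mkS n (Wsb ⟨k, h⟩) := by
  rw [Sbn, WsbN, dif_pos h]
lemma Sbn_out {k : ℕ} (h : ¬ k < n - 1) : Sbn n k = 1 := by
  rw [Sbn, WsbN, dif_neg h, map_one]
lemma Tn_in {k : ℕ} (h : k < n - 1) : Tn n k = mkS n (Wt ⟨k, h⟩) := by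
  rw [Tn, WtN, dif_pos h]
lemma Tn_out {k : ℕ} (h : ¬ k < n - 1) : Tn n k = 1 := by
  rw [Tn, WtN, dif_neg h, map_one]

lemma Rsq (k : ℕ) : Rn n k * Rn n k = 1 := by
  by_cases h : k < n - 1
  · rw [Rn_in h, ← map_mul, mkS_rel (Rel.rho2 ⟨k, h⟩), map_one]
  · rw [Rn_out h, mul_one]

lemma SSb (k : ℕ) : Sn n k * Sbn n k = 1 := by
  by_cases h : k < n - 1
  · rw [Sn_in h, Sbn_in h, ← map_mul, mkS_rel (Rel.ssb ⟨k, h⟩), map_one]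
  · rw [Sn_out h, one_mul, Sbn_out h]

lemma SbS (k : ℕ) : Sbn n k * Sn n k = 1 := by
  by_cases h : k < n - 1
  · rw [Sn_in h, Sbn_in h, ← map_mul, mkS_rel (Rel.sbs ⟨k, h⟩), map_one]
  · rw [Sn_out h, mul_one, Sbn_out h]

lemma Rfar {a b : ℕ} (h : a + 1 < b ∨ b + 1 < a) : Commute (Rn n a) (Rn n b) := by
  by_cases ha : a < n - 1
  · by_cases hb : b < n - 1
    · rw [Commute, SemiconjBy, Rn_in ha, Rn_in hb, ← map_mul, ← map_mul]
      exact mkS_rel (Rel.rr (i := ⟨a, ha⟩) (j := ⟨b, hb⟩) h)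
    · rw [Commute, SemiconjBy, Rn_out hb, mul_one, one_mul]
  · rw [Commute, SemiconjBy, Rn_out ha, mul_one, one_mul]

lemma SRfar {a b : ℕ} (ha : a < n - 1) (hb : b < n - 1) (h : a + 1 < b ∨ b + 1 < a) :
    Sn n a * Rn n b = Rn n b * Sn n a := by
  rw [Sn_in ha, Rn_in hb, ← map_mul, ← map_mul]
  exact mkS_rel (Rel.sr (i := ⟨a, ha⟩) (j := ⟨b, hb⟩) h)

lemma TRfar {a b : ℕ} (h : a + 1 < b ∨ b + 1 < a) : Commute (Tn n a) (Rn n b) := by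
  by_cases ha : a < n - 1
  · by_cases hb : b < n - 1
    · rw [Commute, SemiconjBy, Tn_in ha, Rn_in hb, ← map_mul, ← map_mul]
      exact mkS_rel (Rel.tr (i := ⟨a, ha⟩) (j := ⟨b, hb⟩) h)
    · rw [Commute, SemiconjBy, Rn_out hb, mul_one, one_mul]
  · rw [Commute, SemiconjBy, Tn_out ha, mul_one, one_mul]

lemma Rcancel (k : ℕ) (x : STVB n) : Rn n k * (Rn n k * x) = x := by
  rw [← mul_assoc, Rsq, one_mul]
lemma SbScancel (k : ℕ) (x : STVB n) : Sbn n k * (Sn n k * x) = x := by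
  rw [← mul_assoc, SbS, one_mul]
lemma SSbcancel (k : ℕ) (x : STVB n) : Sn n k * (Sbn n k * x) = x := by
  rw [← mul_assoc, SSb, one_mul]

lemma SbRfar {a b : ℕ} (h : a + 1 < b ∨ b + 1 < a) : Commute (Sbn n a) (Rn n b) := by
  by_cases ha : a < n - 1
  · by_cases hb : b < n - 1
    · have hsr := SRfar ha hb h
      rw [Commute, SemiconjBy]
      calc Sbn n a * Rn n b = Sbn n a * (Rn n b * (Sn n a * (Sbn n a * 1))) := by
            rw [SSbcancel, mul_one]
        _ = Sbn n a * (Sn n a * (Rn n b * (Sbn n a * 1))) := by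
            rw [← mul_assoc (Rn n b), ← hsr, mul_assoc]
        _ = Rn n b * Sbn n a := by rw [SbScancel, mul_one]
    · rw [Commute, SemiconjBy, Rn_out hb, mul_one, one_mul]
  · rw [Commute, SemiconjBy, Sbn_out ha, mul_one, one_mul]

lemma Rbraid {k : ℕ} (h : k + 1 < n - 1) :
    Rn n k * Rn n (k + 1) * Rn n k = Rn n (k + 1) * Rn n k * Rn n (k + 1) := by
  have hk : k < n - 1 := by omega
  rw [Rn_in hk, Rn_in h, ← map_mul, ← map_mul, ← map_mul, ← map_mul]
  exact mkS_rel (Rel.rrr (i := ⟨k, hk⟩) (j := ⟨k + 1, h⟩) rfl)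

lemma TSlide {k : ℕ} (h : k + 1 < n - 1) :
    Rn n k * Tn n (k + 1) * Rn n k = Rn n (k + 1) * Tn n k * Rn n (k + 1) := by
  have hk : k < n - 1 := by omega
  rw [Rn_in hk, Rn_in h, Tn_in h, Tn_in hk, ← map_mul, ← map_mul, ← map_mul, ← map_mul]
  exact mkS_rel (Rel.rtr (i := ⟨k, hk⟩) (j := ⟨k + 1, h⟩) rfl)

lemma SSlide {k : ℕ} (h : k + 1 < n - 1) :
    Rn n k * Sn n (k + 1) * Rn n k = Rn n (k + 1) * Sn n k * Rn n (k + 1) := by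
  have hk : k < n - 1 := by omega
  rw [Rn_in hk, Rn_in h, Sn_in h, Sn_in hk, ← map_mul, ← map_mul, ← map_mul, ← map_mul]
  exact mkS_rel (Rel.rsr (i := ⟨k, hk⟩) (j := ⟨k + 1, h⟩) rfl)

lemma SbSlide {k : ℕ} (h : k + 1 < n - 1) :
    Rn n k * Sbn n (k + 1) * Rn n k = Rn n (k + 1) * Sbn n k * Rn n (k + 1) := by
  apply left_inv_eq_right_inv (a := Rn n k * Sn n (k + 1) * Rn n k)
  · calc Rn n k * Sbn n (k+1) * Rn n k * (Rn n k * Sn n (k+1) * Rn n k)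
        = Rn n k * (Sbn n (k+1) * (Rn n k * (Rn n k * (Sn n (k+1) * Rn n k)))) := by
          simp only [mul_assoc]
      _ = 1 := by rw [Rcancel, SbScancel, Rsq]
  · rw [SSlide h]
    calc Rn n (k+1) * Sn n k * Rn n (k+1) * (Rn n (k+1) * Sbn n k * Rn n (k+1))
        = Rn n (k+1) * (Sn n k * (Rn n (k+1) * (Rn n (k+1) * (Sbn n k * Rn n (k+1))))) := by
          simp only [mul_assoc]
      _ = 1 := by rw [Rcancel, SSbcancel, Rsq]

end SingTVB
namespace SingTVB

variable {n : ℕ}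

def prodR (n : ℕ) (l : List ℕ) : STVB n := (l.map (Rn n)).prod

lemma prodR_nil : prodR n [] = 1 := rfl
lemma prodR_cons (a : ℕ) (l : List ℕ) : prodR n (a :: l) = Rn n a * prodR n l := by
  simp [prodR]
lemma prodR_append (l₁ l₂ : List ℕ) : prodR n (l₁ ++ l₂) = prodR n l₁ * prodR n l₂ := by
  simp [prodR]

lemma prodR_mul_reverse (l : List ℕ) : prodR n l * prodR n l.reverse = 1 := by
  induction l with
  | nil => simp [prodR]
  | cons a t ih =>
    rw [List.reverse_cons, prodR_cons, prodR_append, prodR_cons, prodR_nil, mul_one]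
    calc Rn n a * prodR n t * (prodR n t.reverse * Rn n a)
        = Rn n a * (prodR n t * prodR n t.reverse) * Rn n a := by simp only [mul_assoc]
      _ = 1 := by rw [ih, mul_one, Rsq]

lemma prodR_reverse_mul (l : List ℕ) : prodR n l.reverse * prodR n l = 1 := by
  have := prodR_mul_reverse (n := n) l.reverse
  rwa [List.reverse_reverse] at this

lemma prodR_comm {k : ℕ} {l : List ℕ} (h : ∀ m ∈ l, k + 1 < m ∨ m + 1 < k) :
    Commute (Rn n k) (prodR n l) := by
  induction l with
  | nil => exact Commute.one_right _
  | cons a t ih =>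
    rw [prodR_cons]
    exact (Rfar (h a (by simp))).mul_right (ih fun m hm => h m (by simp [hm]))

/-- `Dm n i j = ρ_{j-1} ⋯ ρ_{i+1}`. -/
def Dm (n i j : ℕ) : STVB n := prodR n (List.range' (i + 1) (j - 1 - i)).reverse
/-- `Am n i j = ρ_{i+1} ⋯ ρ_{j-1}`. -/
def Am (n i j : ℕ) : STVB n := prodR n (List.range' (i + 1) (j - 1 - i))

lemma Am_mul_Dm (i j : ℕ) : Am n i j * Dm n i j = 1 := prodR_mul_reverse _
lemma Dm_mul_Am (i j : ℕ) : Dm n i j * Am n i j = 1 := prodR_reverse_mul _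

lemma Dm_self (i : ℕ) : Dm n i (i + 1) = 1 := by simp [Dm, prodR]
lemma Am_self (i : ℕ) : Am n i (i + 1) = 1 := by simp [Am, prodR]

lemma Dm_comm {k i j : ℕ} (h : ∀ m, i + 1 ≤ m → m < j → k + 1 < m ∨ m + 1 < k) :
    Commute (Rn n k) (Dm n i j) := by
  apply prodR_comm
  intro m hm
  rw [List.mem_reverse, List.mem_range'_1] at hm
  exact h m hm.1 (by omega)

lemma Am_comm {k i j : ℕ} (h : ∀ m, i + 1 ≤ m → m < j → k + 1 < m ∨ m + 1 < k) :
    Commute (Rn n k) (Am n i j) := by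
  apply prodR_comm
  intro m hm
  rw [List.mem_range'_1] at hm
  exact h m hm.1 (by omega)

lemma Dm_rec_top {i j : ℕ} (h : i + 1 ≤ j) : Dm n i (j + 1) = Rn n j * Dm n i j := by
  have : j + 1 - 1 - i = (j - 1 - i) + 1 := by omega
  rw [Dm, Dm, this, List.range'_concat, List.reverse_append]
  simp only [List.reverse_cons, List.reverse_nil, List.nil_append, List.singleton_append,
    prodR_cons]
  congr 2
  omega

lemma Am_rec_top {i j : ℕ} (h : i + 1 ≤ j) : Am n i (j + 1) = Am n i j * Rn n j := by
  have : j + 1 - 1 - i = (j - 1 - i) + 1 := by omega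
  rw [Am, Am, this, List.range'_concat, prodR_append]
  have : i + 1 + 1 * (j - 1 - i) = j := by omega
  rw [this, prodR_cons, prodR_nil, mul_one]

lemma Dm_rec_bot {i j : ℕ} (h : i + 2 ≤ j) : Dm n i j = Dm n (i + 1) j * Rn n (i + 1) := by
  have h1 : j - 1 - i = (j - 1 - (i + 1)) + 1 := by omega
  rw [Dm, Dm, h1, List.range'_succ, List.reverse_cons, prodR_append, prodR_cons, prodR_nil,
    mul_one]

lemma Am_rec_bot {i j : ℕ} (h : i + 2 ≤ j) : Am n i j = Rn n (i + 1) * Am n (i + 1) j := by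
  have h1 : j - 1 - i = (j - 1 - (i + 1)) + 1 := by omega
  rw [Am, Am, h1, List.range'_succ, prodR_cons]

lemma Dm_slide : ∀ j, j ≤ n - 1 → ∀ k, ∀ {i}, i + 1 ≤ k → k + 2 ≤ j →
    Rn n k * Dm n i j = Dm n i j * Rn n (k + 1) := by
  intro j
  induction j with
  | zero => intro _ k i _ h2; omega
  | succ j ih =>
    intro hj k i h1 h2
    have hij : i + 1 ≤ j := by omega
    rw [Dm_rec_top hij]
    rcases Nat.lt_or_ge k (j - 1) with hk | hk
    · -- k + 2 ≤ j
      have hfar : Commute (Rn n k) (Rn n j) := Rfar (by omega)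
      calc Rn n k * (Rn n j * Dm n i j) = Rn n j * (Rn n k * Dm n i j) := by
            rw [← mul_assoc, hfar.eq, mul_assoc]
        _ = Rn n j * Dm n i j * Rn n (k + 1) := by
            rw [ih (by omega) k h1 (by omega), mul_assoc]
    · -- k + 1 = j
      have hkj : j = k + 1 := by omega
      subst hkj
      rw [Dm_rec_top (by omega : i + 1 ≤ k)]
      have hcomm : Commute (Rn n (k + 1)) (Dm n i k) :=
        Dm_comm (by intro m hm1 hm2; omega)
      calc Rn n k * (Rn n (k + 1) * (Rn n k * Dm n i k))
          = Rn n k * Rn n (k + 1) * Rn n k * Dm n i k := by simp only [mul_assoc]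
        _ = Rn n (k + 1) * Rn n k * Rn n (k + 1) * Dm n i k := by rw [Rbraid (by omega)]
        _ = Rn n (k + 1) * (Rn n k * (Dm n i k * Rn n (k + 1))) := by
            simp only [mul_assoc]; rw [← hcomm.eq]
        _ = Rn n (k + 1) * (Rn n k * Dm n i k) * Rn n (k + 1) := by simp only [mul_assoc]

lemma Am_slide {j k i : ℕ} (hj : j ≤ n - 1) (h1 : i + 1 ≤ k) (h2 : k + 2 ≤ j) :
    Am n i j * Rn n k = Rn n (k + 1) * Am n i j := by
  calc Am n i j * Rn n k = Am n i j * (Rn n k * (Dm n i j * Am n i j)) := by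
        rw [Dm_mul_Am, mul_one]
    _ = Am n i j * (Dm n i j * (Rn n (k + 1) * Am n i j)) := by
        rw [← mul_assoc (Rn n k), Dm_slide j hj k h1 h2, mul_assoc]
    _ = Rn n (k + 1) * Am n i j := by rw [← mul_assoc, ← mul_assoc, Am_mul_Dm, one_mul]

end SingTVB
namespace SingTVB

variable {n : ℕ}

lemma cont3 {M : Type*} [Monoid M] {a b c d e f : M} (h : a * b * c = d * e * f) (x : M) :
    a * (b * (c * x)) = d * (e * (f * x)) := by
  rw [← mul_assoc, ← mul_assoc, h, mul_assoc, mul_assoc]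

lemma conj_of_commute {x : STVB n} {k : ℕ} (h : Commute (Rn n k) x) :
    Rn n k * x * Rn n k = x := by
  rw [h.eq, mul_assoc, Rsq, mul_one]

lemma sandwich {M : Type*} [Monoid M] {r D A : M} (e : M) (hD : Commute r D)
    (hA : Commute r A) : r * (D * e * A) * r = D * (r * e * r) * A := by
  calc r * (D * e * A) * r = (r * D) * e * (A * r) := by simp only [mul_assoc]
    _ = (D * r) * e * (r * A) := by rw [hD.eq, ← hA.eq]
    _ = D * (r * e * r) * A := by simp only [mul_assoc]

def Eb (c : ℕ → STVB n) (b : Bool) (i : ℕ) : STVB n :=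
  if b then Rn n i * c i * Rn n i else c i

lemma Eb_false (c : ℕ → STVB n) (i : ℕ) : Eb c false i = c i := rfl
lemma Eb_true (c : ℕ → STVB n) (i : ℕ) : Eb c true i = Rn n i * c i * Rn n i := rfl

section CoreFam

variable (c : ℕ → STVB n)
  (hC1 : ∀ k m, k < n - 1 → m + 1 < n → (k + 1 < m ∨ m + 1 < k) → Commute (Rn n k) (c m))
  (hC2 : ∀ i, i + 2 < n → Rn n i * c (i + 1) * Rn n i = Rn n (i + 1) * c i * Rn n (i + 1))

include hC1 in
lemma Eb_comm {k m : ℕ} (b : Bool) (hk : k < n - 1) (hm : m + 1 < n)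
    (h : k + 1 < m ∨ m + 1 < k) : Commute (Rn n k) (Eb c b m) := by
  cases b
  · exact hC1 k m hk hm h
  · rw [Eb_true]
    exact ((Rfar h).mul_right (hC1 k m hk hm h)).mul_right (Rfar h)

include hC2 in
lemma Eb_slide {i : ℕ} (b : Bool) (h : i + 2 < n) :
    Rn n i * Eb c b (i + 1) * Rn n i = Rn n (i + 1) * Eb c b i * Rn n (i + 1) := by
  cases b
  · exact hC2 i h
  · rw [Eb_true, Eb_true]
    calc Rn n i * (Rn n (i+1) * c (i+1) * Rn n (i+1)) * Rn n i
        = (Rn n i * Rn n (i+1) * Rn n i) * (Rn n i * c (i+1) * Rn n i) *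
            (Rn n i * Rn n (i+1) * Rn n i) := by
          simp only [mul_assoc]; rw [Rcancel, Rcancel]
      _ = (Rn n (i+1) * Rn n i * Rn n (i+1)) * (Rn n (i+1) * c i * Rn n (i+1)) *
            (Rn n (i+1) * Rn n i * Rn n (i+1)) := by
          rw [Rbraid (by omega), hC2 i h]
      _ = Rn n (i+1) * (Rn n i * c i * Rn n i) * Rn n (i+1) := by
          simp only [mul_assoc]; rw [Rcancel, Rcancel]

include hC2 in
lemma Eb_c2 {i : ℕ} (b : Bool) (h : i + 2 < n) :
    Rn n i * (Rn n (i + 1) * Eb c b i * Rn n (i + 1)) * Rn n i = Eb c b (i + 1) := by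
  cases b
  · rw [Eb_false, Eb_false, ← hC2 i h]
    simp only [mul_assoc]
    rw [Rcancel, Rsq, mul_one]
  · rw [Eb_true, Eb_true]
    calc Rn n i * (Rn n (i+1) * (Rn n i * c i * Rn n i) * Rn n (i+1)) * Rn n i
        = (Rn n i * Rn n (i+1) * Rn n i) * c i * (Rn n i * Rn n (i+1) * Rn n i) := by
          simp only [mul_assoc]
      _ = (Rn n (i+1) * Rn n i * Rn n (i+1)) * c i * (Rn n (i+1) * Rn n i * Rn n (i+1)) := by
          rw [Rbraid (by omega)]
      _ = Rn n (i+1) * (Rn n i * (Rn n (i+1) * c i * Rn n (i+1)) * Rn n i) * Rn n (i+1) := by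
          simp only [mul_assoc]
      _ = Rn n (i+1) * (Rn n i * (Rn n i * c (i+1) * Rn n i) * Rn n i) * Rn n (i+1) := by
          rw [← hC2 i h]
      _ = Rn n (i+1) * c (i+1) * Rn n (i+1) := by
          simp only [mul_assoc]; rw [Rcancel, Rcancel]

/-- The word for λ/y with orientation data: `Lg2 c b i j` (for `i < j`) is
`D_{ij} · E · A_{ij}` where `E = c i` if `b = false`, `ρ_i (c i) ρ_i` if `b = true`. -/
def Lg2 (c : ℕ → STVB n) (b : Bool) (i j : ℕ) : STVB n :=
  Dm n i j * Eb c b i * Am n i j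

/-- swap of `k` and `k+1` on ℕ. -/
def sw (k m : ℕ) : ℕ := if m = k then k + 1 else if m = k + 1 then k else m

include hC1 hC2 in
theorem conj_Lg2 {b : Bool} {k i j : ℕ} (hk : k < n - 1) (hij : i < j) (hj : j < n) :
    Rn n k * Lg2 c b i j * Rn n k =
      if i = k ∧ j = k + 1 then Lg2 c (!b) i j else Lg2 c b (sw k i) (sw k j) := by
  by_cases hflip : i = k ∧ j = k + 1
  · rw [if_pos hflip]
    obtain ⟨rfl, rfl⟩ := hflip
    rw [Lg2, Lg2, Dm_self, Am_self, one_mul, mul_one, one_mul, mul_one]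
    cases b
    · rw [Bool.not_false, Eb_false, Eb_true]
    · rw [Bool.not_true, Eb_true, Eb_false]
      simp only [mul_assoc]
      rw [Rcancel, Rsq, mul_one]
  · rw [if_neg hflip]
    by_cases h1 : k + 1 < i
    · -- far left
      have e1 : sw k i = i := by unfold sw; split_ifs <;> omega
      have e2 : sw k j = j := by unfold sw; split_ifs <;> omega
      rw [e1, e2, Lg2,
        sandwich _ (Dm_comm (by intro m hm1 hm2; omega)) (Am_comm (by intro m hm1 hm2; omega)),
        conj_of_commute (Eb_comm c hC1 (k := k) (m := i) b hk (by omega) (by omega))]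
    by_cases h2 : k + 1 = i
    · -- k = i - 1
      subst h2
      have e1 : sw k (k+1) = k := by unfold sw; split_ifs <;> omega
      have e2 : sw k j = j := by unfold sw; split_ifs <;> omega
      rw [e1, e2, Lg2, Lg2,
        sandwich _ (Dm_comm (by intro m hm1 hm2; omega)) (Am_comm (by intro m hm1 hm2; omega)),
        Eb_slide c hC2 (i := k) b (by omega), Dm_rec_bot (i := k) (j := j) (by omega),
        Am_rec_bot (i := k) (j := j) (by omega)]
      simp only [mul_assoc]
    by_cases h3 : k = i
    · -- k = i, j ≥ i + 2
      subst h3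
      have hj2 : k + 2 ≤ j := by
        rcases Nat.lt_or_ge (k+1) j with h | h
        · omega
        · exact absurd ⟨rfl, by omega⟩ hflip
      have e1 : sw k k = k + 1 := by unfold sw; split_ifs <;> omega
      have e2 : sw k j = j := by unfold sw; split_ifs <;> omega
      rw [e1, e2]
      have hL : Lg2 c b k j
          = Dm n (k+1) j * (Rn n (k+1) * Eb c b k * Rn n (k+1)) * Am n (k+1) j := by
        rw [Lg2, Dm_rec_bot (i := k) (j := j) (by omega), Am_rec_bot (i := k) (j := j) (by omega)]
        simp only [mul_assoc]
      rw [hL,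
        sandwich _ (Dm_comm (by intro m hm1 hm2; omega)) (Am_comm (by intro m hm1 hm2; omega)),
        Eb_c2 c hC2 (i := k) b (by omega)]
      rfl
    -- now i + 1 ≤ k
    have hik : i + 1 ≤ k := by omega
    by_cases h4 : k + 2 ≤ j
    · -- inside
      have e1 : sw k i = i := by unfold sw; split_ifs <;> omega
      have e2 : sw k j = j := by unfold sw; split_ifs <;> omega
      rw [e1, e2, Lg2]
      calc Rn n k * (Dm n i j * Eb c b i * Am n i j) * Rn n k
          = (Rn n k * Dm n i j) * Eb c b i * (Am n i j * Rn n k) := by simp only [mul_assoc]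
        _ = (Dm n i j * Rn n (k+1)) * Eb c b i * (Rn n (k+1) * Am n i j) := by
            rw [Dm_slide j (by omega) k (i := i) (by omega) (by omega),
              Am_slide (j := j) (k := k) (i := i) (by omega) (by omega) (by omega)]
        _ = Dm n i j * (Rn n (k+1) * Eb c b i * Rn n (k+1)) * Am n i j := by
            simp only [mul_assoc]
        _ = Dm n i j * Eb c b i * Am n i j := by
            rw [conj_of_commute (Eb_comm c hC1 (k := k+1) (m := i) b (by omega) (by omega) (by omega))]
    by_cases h5 : k + 1 = j
    · -- k = j - 1, i < k
      have e1 : sw k i = i := by unfold sw; split_ifs <;> omega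
      have e2 : sw k j = k := by unfold sw; split_ifs <;> omega
      rw [e1, e2, Lg2, Lg2, ← h5, Dm_rec_top (i := i) (j := k) (by omega),
        Am_rec_top (i := i) (j := k) (by omega)]
      simp only [mul_assoc]
      rw [Rcancel, Rsq, mul_one]
    by_cases h6 : k = j
    · -- k = j
      have e1 : sw k i = i := by unfold sw; split_ifs <;> omega
      have e2 : sw k j = k + 1 := by unfold sw; split_ifs <;> omega
      rw [e1, e2, ← h6, Lg2, Lg2, Dm_rec_top (i := i) (j := k) (by omega),
        Am_rec_top (i := i) (j := k) (by omega)]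
      simp only [mul_assoc]
    · -- far right : j + 1 ≤ k
      have e1 : sw k i = i := by unfold sw; split_ifs <;> omega
      have e2 : sw k j = j := by unfold sw; split_ifs <;> omega
      rw [e1, e2, Lg2,
        sandwich _ (Dm_comm (by intro m hm1 hm2; omega)) (Am_comm (by intro m hm1 hm2; omega)),
        conj_of_commute (Eb_comm c hC1 (k := k) (m := i) b hk (by omega) (by omega))]

end CoreFam

end SingTVB
namespace SingTVB

variable {n : ℕ}

def LgF (c : ℕ → STVB n) (i j : ℕ) : STVB n :=
  if i < j then Lg2 c false i j else Lg2 c true j i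

lemma sw_lt {k i j : ℕ} (hij : i < j) (hflip : ¬(i = k ∧ j = k + 1)) :
    sw k i < sw k j := by
  by_cases hik : i = k
  · have hj : j ≠ k + 1 := fun h => hflip ⟨hik, h⟩
    unfold sw; split_ifs <;> omega
  · unfold sw; split_ifs <;> omega

theorem conj_LgF (c : ℕ → STVB n)
    (hC1 : ∀ k m, k < n - 1 → m + 1 < n → (k + 1 < m ∨ m + 1 < k) → Commute (Rn n k) (c m))
    (hC2 : ∀ i, i + 2 < n → Rn n i * c (i + 1) * Rn n i = Rn n (i + 1) * c i * Rn n (i + 1))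
    {k i j : ℕ} (hk : k < n - 1) (hi : i < n) (hj : j < n) (hij : i ≠ j) :
    Rn n k * LgF c i j * Rn n k = LgF c (sw k i) (sw k j) := by
  rcases Nat.lt_or_ge i j with h | h
  · simp only [LgF]
    rw [if_pos h, conj_Lg2 c hC1 hC2 hk h hj]
    by_cases hflip : i = k ∧ j = k + 1
    · rw [if_pos hflip]
      obtain ⟨rfl, rfl⟩ := hflip
      have s1 : sw i i = i + 1 := by unfold sw; split_ifs <;> omega
      have s2 : sw i (i + 1) = i := by unfold sw; split_ifs <;> omega
      rw [s1, s2, if_neg (by omega : ¬ i + 1 < i), Bool.not_false]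
    · rw [if_neg hflip, if_pos (sw_lt h hflip)]
  · have hji : j < i := by omega
    simp only [LgF]
    rw [if_neg (by omega : ¬ i < j), conj_Lg2 c hC1 hC2 hk hji hi]
    by_cases hflip : j = k ∧ i = k + 1
    · rw [if_pos hflip]
      obtain ⟨rfl, rfl⟩ := hflip
      have s1 : sw j (j + 1) = j := by unfold sw; split_ifs <;> omega
      have s2 : sw j j = j + 1 := by unfold sw; split_ifs <;> omega
      rw [s1, s2, if_pos (by omega : j < j + 1), Bool.not_true]
    · rw [if_neg hflip]
      have hlt := sw_lt hji hflip
      rw [if_neg (by omega)]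

def cLam (n : ℕ) : ℕ → STVB n := fun m => Rn n m * Sbn n m
def cY (n : ℕ) : ℕ → STVB n := fun m => Tn n m * Rn n m

lemma cLam_C1 : ∀ k m, k < n - 1 → m + 1 < n → (k + 1 < m ∨ m + 1 < k) →
    Commute (Rn n k) (cLam n m) := fun k m _ _ h =>
  (Rfar h).mul_right ((SbRfar (Or.symm h)).symm)

lemma cY_C1 : ∀ k m, k < n - 1 → m + 1 < n → (k + 1 < m ∨ m + 1 < k) →
    Commute (Rn n k) (cY n m) := fun k m _ _ h =>
  ((TRfar (Or.symm h)).symm).mul_right (Rfar h)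

lemma cLam_C2 : ∀ i, i + 2 < n →
    Rn n i * cLam n (i + 1) * Rn n i = Rn n (i + 1) * cLam n i * Rn n (i + 1) := by
  intro i h
  unfold cLam
  calc Rn n i * (Rn n (i+1) * Sbn n (i+1)) * Rn n i
      = (Rn n i * Rn n (i+1) * Rn n i) * (Rn n i * Sbn n (i+1) * Rn n i) := by
        simp only [mul_assoc]; rw [Rcancel]
    _ = (Rn n (i+1) * Rn n i * Rn n (i+1)) * (Rn n (i+1) * Sbn n i * Rn n (i+1)) := by
        rw [Rbraid (by omega), SbSlide (by omega)]
    _ = Rn n (i+1) * (Rn n i * Sbn n i) * Rn n (i+1) := by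
        simp only [mul_assoc]; rw [Rcancel]

lemma cY_C2 : ∀ i, i + 2 < n →
    Rn n i * cY n (i + 1) * Rn n i = Rn n (i + 1) * cY n i * Rn n (i + 1) := by
  intro i h
  unfold cY
  calc Rn n i * (Tn n (i+1) * Rn n (i+1)) * Rn n i
      = (Rn n i * Tn n (i+1) * Rn n i) * (Rn n i * Rn n (i+1) * Rn n i) := by
        simp only [mul_assoc]; rw [Rcancel]
    _ = (Rn n (i+1) * Tn n i * Rn n (i+1)) * (Rn n (i+1) * Rn n i * Rn n (i+1)) := by
        rw [TSlide (by omega), Rbraid (by omega)]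
    _ = Rn n (i+1) * (Tn n i * Rn n i) * Rn n (i+1) := by
        simp only [mul_assoc]; rw [Rcancel]

lemma mkS_desc (i j : ℕ) : mkS n (desc n i j) = Dm n i j := by
  unfold desc Dm prodR
  rw [map_list_prod, List.map_map]
  rfl

lemma mkS_asc (i j : ℕ) : mkS n (asc n i j) = Am n i j := by
  unfold asc Am prodR
  rw [map_list_prod, List.map_map]
  rfl

lemma lam_eq (i j : Fin n) : lam n i j = LgF (cLam n) i.val j.val := by
  by_cases h : (i : ℕ) < (j : ℕ)
  · rw [lam, lamW, if_pos h, LgF, if_pos h, Lg2, Eb_false]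
    rw [map_mul, map_mul, mkS_desc, mkS_asc, map_mul]
    rfl
  · rw [lam, lamW, if_neg h, LgF, if_neg h, Lg2, Eb_true]
    rw [map_mul, map_mul, mkS_desc, mkS_asc, map_mul, map_mul, map_mul]
    rfl

lemma yel_eq (i j : Fin n) : yel n i j = LgF (cY n) i.val j.val := by
  by_cases h : (i : ℕ) < (j : ℕ)
  · rw [yel, yW, if_pos h, LgF, if_pos h, Lg2, Eb_false]
    rw [map_mul, map_mul, mkS_desc, mkS_asc, map_mul]
    rfl
  · rw [yel, yW, if_neg h, LgF, if_neg h, Lg2, Eb_true]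
    rw [map_mul, map_mul, mkS_desc, mkS_asc, map_mul, map_mul, map_mul]
    rfl

lemma rhoE_eq (k : Fin (n - 1)) : rhoE n k = Rn n k.val := by
  rw [Rn_in k.isLt]
  rfl

lemma swp_val (k : Fin (n - 1)) (i : Fin n) : ((swp k i : Fin n) : ℕ) = sw k.val i.val := by
  rcases eq_or_ne i (fa k) with h | h
  · subst h
    rw [swp, Equiv.swap_apply_left]
    simp [fa, fb, sw]
  · rcases eq_or_ne i (fb k) with h2 | h2
    · subst h2
      rw [swp, Equiv.swap_apply_right]
      simp [fa, fb, sw]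
    · rw [swp, Equiv.swap_apply_of_ne_of_ne h h2]
      have e1 : (i : ℕ) ≠ k.val := fun hh => h (Fin.ext hh)
      have e2 : (i : ℕ) ≠ k.val + 1 := fun hh => h2 (Fin.ext hh)
      simp [sw, e1, e2]

lemma gen_conj_lam (k : Fin (n - 1)) (i j : Fin n) (hij : i ≠ j) :
    rhoE n k * lam n i j * rhoE n k = lam n (swp k i) (swp k j) := by
  rw [rhoE_eq, lam_eq, lam_eq, swp_val, swp_val]
  exact conj_LgF (cLam n) cLam_C1 cLam_C2 k.isLt i.isLt j.isLt
    (fun hh => hij (Fin.ext hh))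

lemma gen_conj_yel (k : Fin (n - 1)) (i j : Fin n) (hij : i ≠ j) :
    rhoE n k * yel n i j * rhoE n k = yel n (swp k i) (swp k j) := by
  rw [rhoE_eq, yel_eq, yel_eq, swp_val, swp_val]
  exact conj_LgF (cY n) cY_C1 cY_C2 k.isLt i.isLt j.isLt
    (fun hh => hij (Fin.ext hh))

lemma gen_conj_gam (k : Fin (n - 1)) (i : Fin n) :
    rhoE n k * gamE n i * rhoE n k = gamE n (swp k i) := by
  rw [rhoE_eq]
  have key : gamE n (fb k) * Rn n k.val = Rn n k.val * gamE n (fa k) := by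
    rw [Rn_in k.isLt, gamE, gamE, ← map_mul, ← map_mul]
    exact mkS_rel (Rel.grel k)
  rcases eq_or_ne i (fa k) with h | h
  · subst h
    rw [swp, Equiv.swap_apply_left,
      show Rn n k.val * gamE n (fa k) = gamE n (fb k) * Rn n k.val from key.symm,
      mul_assoc, Rsq, mul_one]
  · rcases eq_or_ne i (fb k) with h2 | h2
    · subst h2
      rw [swp, Equiv.swap_apply_right]
      have h3 : gamE n (fb k) = Rn n k.val * gamE n (fa k) * Rn n k.val := by
        calc gamE n (fb k) = gamE n (fb k) * Rn n k.val * Rn n k.val := by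
              rw [mul_assoc, Rsq, mul_one]
          _ = Rn n k.val * gamE n (fa k) * Rn n k.val := by rw [key]
      rw [h3]
      simp only [mul_assoc]
      rw [Rcancel, Rsq, mul_one]
    · rw [swp, Equiv.swap_apply_of_ne_of_ne h h2]
      have hc : Commute (Rn n k.val) (gamE n i) := by
        rw [Commute, SemiconjBy, Rn_in k.isLt, gamE, ← map_mul, ← map_mul]
        exact (mkS_rel (Rel.grc (i := k) (j := i) h h2)).symm
      exact conj_of_commute hc

end SingTVB
open SingTVB in
/-- Lemma on the conjugation action: every element `a` of the submonoid
generated by the `ρᵢ` is a unit, and conjugation by `a` permutes the generators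
`λ_{i,j}`, `y_{i,j}`, `γ_i` according to the permutation `π = φ₁(a)⁻¹`. -/
theorem stvb_conjugation_action (n : ℕ) (hn : 2 ≤ n) (φ : STVB n →* Equiv.Perm (Fin n))
    (hs : ∀ i : Fin (n - 1), φ (sigE n i) = swp i)
    (hsb : ∀ i : Fin (n - 1), φ (sigbE n i) = swp i)
    (ht : ∀ i : Fin (n - 1), φ (tauE n i) = swp i)
    (hr : ∀ i : Fin (n - 1), φ (rhoE n i) = swp i)
    (hg : ∀ j : Fin n, φ (gamE n j) = 1)
    (a : STVB n) (ha : a ∈ Submonoid.closure (Set.range (rhoE n))) :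
    ∃ b : STVB n, a * b = 1 ∧ b * a = 1 ∧
      (∀ i j : Fin n, i ≠ j → b * lam n i j * a = lam n ((φ a)⁻¹ i) ((φ a)⁻¹ j)) ∧
      (∀ i j : Fin n, i ≠ j → b * yel n i j * a = yel n ((φ a)⁻¹ i) ((φ a)⁻¹ j)) ∧
      (∀ i : Fin n, b * gamE n i * a = gamE n ((φ a)⁻¹ i)) := by
  refine Submonoid.closure_induction
    (motive := fun x _ => ∃ b : STVB n, x * b = 1 ∧ b * x = 1 ∧
      (∀ i j : Fin n, i ≠ j → b * lam n i j * x = lam n ((φ x)⁻¹ i) ((φ x)⁻¹ j)) ∧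
      (∀ i j : Fin n, i ≠ j → b * yel n i j * x = yel n ((φ x)⁻¹ i) ((φ x)⁻¹ j)) ∧
      (∀ i : Fin n, b * gamE n i * x = gamE n ((φ x)⁻¹ i))) ?_ ?_ ?_ ha
  · rintro x ⟨k, rfl⟩
    have hsq : rhoE n k * rhoE n k = 1 := by rw [rhoE_eq]; exact Rsq _
    have hinv : (φ (rhoE n k))⁻¹ = swp k := by
      rw [hr k, swp, Equiv.swap_inv]
    refine ⟨rhoE n k, hsq, hsq, ?_, ?_, ?_⟩
    · intro i j hij
      rw [hinv]
      exact gen_conj_lam k i j hij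
    · intro i j hij
      rw [hinv]
      exact gen_conj_yel k i j hij
    · intro i
      rw [hinv]
      exact gen_conj_gam k i
  · exact ⟨1, one_mul 1, one_mul 1,
      fun i j hij => by simp,
      fun i j hij => by simp,
      fun i => by simp⟩
  · rintro x y hxm hym ⟨bx, hx1, hx2, hxl, hxy, hxg⟩ ⟨by', hy1, hy2, hyl, hyy, hyg⟩
    have hinv : (φ (x * y))⁻¹ = (φ y)⁻¹ * (φ x)⁻¹ := by
      rw [map_mul, mul_inv_rev]
    refine ⟨by' * bx, ?_, ?_, ?_, ?_, ?_⟩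
    · calc x * y * (by' * bx) = x * (y * by') * bx := by simp only [mul_assoc]
        _ = 1 := by rw [hy1, mul_one, hx1]
    · calc by' * bx * (x * y) = by' * (bx * x) * y := by simp only [mul_assoc]
        _ = 1 := by rw [hx2, mul_one, hy2]
    · intro i j hij
      calc by' * bx * lam n i j * (x * y)
          = by' * (bx * lam n i j * x) * y := by simp only [mul_assoc]
        _ = by' * lam n ((φ x)⁻¹ i) ((φ x)⁻¹ j) * y := by rw [hxl i j hij]
        _ = lam n ((φ y)⁻¹ ((φ x)⁻¹ i)) ((φ y)⁻¹ ((φ x)⁻¹ j)) :=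
            hyl _ _ (((φ x)⁻¹).injective.ne hij)
        _ = lam n ((φ (x * y))⁻¹ i) ((φ (x * y))⁻¹ j) := by
            rw [hinv, Equiv.Perm.mul_apply, Equiv.Perm.mul_apply]
    · intro i j hij
      calc by' * bx * yel n i j * (x * y)
          = by' * (bx * yel n i j * x) * y := by simp only [mul_assoc]
        _ = by' * yel n ((φ x)⁻¹ i) ((φ x)⁻¹ j) * y := by rw [hxy i j hij]
        _ = yel n ((φ y)⁻¹ ((φ x)⁻¹ i)) ((φ y)⁻¹ ((φ x)⁻¹ j)) :=
            hyy _ _ (((φ x)⁻¹).injective.ne hij)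
        _ = yel n ((φ (x * y))⁻¹ i) ((φ (x * y))⁻¹ j) := by
            rw [hinv, Equiv.Perm.mul_apply, Equiv.Perm.mul_apply]
    · intro i
      calc by' * bx * gamE n i * (x * y)
          = by' * (bx * gamE n i * x) * y := by simp only [mul_assoc]
        _ = by' * gamE n ((φ x)⁻¹ i) * y := by rw [hxg i]
        _ = gamE n ((φ y)⁻¹ ((φ x)⁻¹ i)) := hyg _
        _ = gamE n ((φ (x * y))⁻¹ i) := by rw [hinv, Equiv.Perm.mul_apply]
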